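/- Let s₁ be the real 4-dimensional Lie algebra with basis e₁, e₂, e₃, e₄ and nonzero brackets ⁅e₂, e₄⁆ = −e₁ and ⁅e₃, e₄⁆ = −e₃ (all other brackets of basis elements zero, extended bilinearly and antisymmetrically). Write e_{ij} = e_i ⊗ e_j − e_j ⊗ e_i ∈ s₁ ⊗[ℝ] s₁. Then the orbit of e_{14} under the maps T ⊗ T, for T ranging over all Lie algebra automorphisms of s₁, is exactly the set { x₁ • e_{12} + x₂ • e_{13} + x₃ • e_{14} : x₁, x₂ ∈ ℝ, x₃ ∈ ℝ, x₃ ≠ 0 }. -/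

import Mathlib

open TensorProduct

section Aux

variable {L : Type*} [LieRing L] [LieAlgebra ℝ L] (b : Module.Basis (Fin 4) ℝ L)

/-- general bracket formula -/
lemma aux_brkt
    (h12 : ⁅b 0, b 1⁆ = 0) (h13 : ⁅b 0, b 2⁆ = 0) (h14 : ⁅b 0, b 3⁆ = 0)
    (h23 : ⁅b 1, b 2⁆ = 0) (h24 : ⁅b 1, b 3⁆ = -b 0) (h34 : ⁅b 2, b 3⁆ = -b 2)
    (a0 a1 a2 a3 d0 d1 d2 d3 : ℝ) :
    ⁅a0 • b 0 + a1 • b 1 + a2 • b 2 + a3 • b 3,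
      d0 • b 0 + d1 • b 1 + d2 • b 2 + d3 • b 3⁆
    = (a3*d1 - a1*d3) • b 0 + (a3*d2 - a2*d3) • b 2 := by
  have h21 : ⁅b 1, b 0⁆ = 0 := by rw [← lie_skew, h12, neg_zero]
  have h31 : ⁅b 2, b 0⁆ = 0 := by rw [← lie_skew, h13, neg_zero]
  have h41 : ⁅b 3, b 0⁆ = 0 := by rw [← lie_skew, h14, neg_zero]
  have h32 : ⁅b 2, b 1⁆ = 0 := by rw [← lie_skew, h23, neg_zero]
  have h42 : ⁅b 3, b 1⁆ = b 0 := by rw [← lie_skew, h24, neg_neg]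
  have h43 : ⁅b 3, b 2⁆ = b 2 := by rw [← lie_skew, h34, neg_neg]
  simp only [add_lie, lie_add, smul_lie, lie_smul, h12, h13, h14, h23, h24, h34,
    h21, h31, h41, h32, h42, h43, lie_self, smul_zero, zero_add, add_zero, smul_neg]
  module

lemma aux_indep (a0 a1 a2 a3 : ℝ)
    (h : a0 • b 0 + a1 • b 1 + a2 • b 2 + a3 • b 3 = 0) :
    a0 = 0 ∧ a1 = 0 ∧ a2 = 0 ∧ a3 = 0 := by
  have h' := Fintype.linearIndependent_iff.mp b.linearIndependent ![a0,a1,a2,a3] (by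
    rw [Fin.sum_univ_four]; simpa using h)
  exact ⟨h' 0, h' 1, h' 2, h' 3⟩

lemma aux_expand (x : L) :
    x = b.repr x 0 • b 0 + b.repr x 1 • b 1 + b.repr x 2 • b 2 + b.repr x 3 • b 3 := by
  have := b.sum_repr x
  rw [Fin.sum_univ_four] at this
  exact this.symm

noncomputable def auxT (c α β : ℝ) : L →ₗ[ℝ] L :=
  b.constr ℝ ![c • b 0, c • b 1, b 2, α • b 1 + β • b 2 + b 3]

lemma auxT0 (c α β : ℝ) : auxT b c α β (b 0) = c • b 0 := by simp [auxT]
lemma auxT1 (c α β : ℝ) : auxT b c α β (b 1) = c • b 1 := by simp [auxT]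
lemma auxT2 (c α β : ℝ) : auxT b c α β (b 2) = b 2 := by simp [auxT]
lemma auxT3 (c α β : ℝ) : auxT b c α β (b 3) = α • b 1 + β • b 2 + b 3 := by simp [auxT]

lemma auxTapp (c α β a0 a1 a2 a3 : ℝ) :
    auxT b c α β (a0 • b 0 + a1 • b 1 + a2 • b 2 + a3 • b 3)
    = (a0*c) • b 0 + (a1*c + a3*α) • b 1 + (a2 + a3*β) • b 2 + a3 • b 3 := by
  simp only [map_add, map_smul, auxT0, auxT1, auxT2, auxT3]
  module

lemma auxT_comp (c α β : ℝ) (hc : c ≠ 0) :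
    (auxT b c α β).comp (auxT b c⁻¹ (-(α/c)) (-β)) = LinearMap.id ∧
    (auxT b c⁻¹ (-(α/c)) (-β)).comp (auxT b c α β) = LinearMap.id := by
  constructor <;> apply b.ext <;> intro i <;> fin_cases i
  · show auxT b c α β (auxT b c⁻¹ (-(α/c)) (-β) (b 0)) = LinearMap.id (b 0)
    simp only [auxT0, map_smul, LinearMap.id_apply, smul_smul]
    rw [inv_mul_cancel₀ hc, one_smul]
  · show auxT b c α β (auxT b c⁻¹ (-(α/c)) (-β) (b 1)) = LinearMap.id (b 1)
    simp only [auxT1, map_smul, LinearMap.id_apply, smul_smul]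
    rw [inv_mul_cancel₀ hc, one_smul]
  · show auxT b c α β (auxT b c⁻¹ (-(α/c)) (-β) (b 2)) = LinearMap.id (b 2)
    simp only [auxT2, LinearMap.id_apply]
  · show auxT b c α β (auxT b c⁻¹ (-(α/c)) (-β) (b 3)) = LinearMap.id (b 3)
    simp only [auxT3, map_add, map_smul, auxT1, auxT2, LinearMap.id_apply, smul_smul]
    match_scalars <;> field_simp <;> ring
  · show auxT b c⁻¹ (-(α/c)) (-β) (auxT b c α β (b 0)) = LinearMap.id (b 0)
    simp only [auxT0, map_smul, LinearMap.id_apply, smul_smul]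
    rw [mul_inv_cancel₀ hc, one_smul]
  · show auxT b c⁻¹ (-(α/c)) (-β) (auxT b c α β (b 1)) = LinearMap.id (b 1)
    simp only [auxT1, map_smul, LinearMap.id_apply, smul_smul]
    rw [mul_inv_cancel₀ hc, one_smul]
  · show auxT b c⁻¹ (-(α/c)) (-β) (auxT b c α β (b 2)) = LinearMap.id (b 2)
    simp only [auxT2, LinearMap.id_apply]
  · show auxT b c⁻¹ (-(α/c)) (-β) (auxT b c α β (b 3)) = LinearMap.id (b 3)
    simp only [auxT3, map_add, map_smul, auxT1, auxT2, LinearMap.id_apply, smul_smul]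
    match_scalars <;> field_simp <;> ring

end Aux

/-- For the real 4-dimensional Lie algebra `s₁` (Šnobl–Winternitz `s_{4,1}`), with
`e_{ij} = e_i ⊗ e_j - e_j ⊗ e_i`, the orbit of `e₁₄` under the maps `T ⊗ T`, with `T`
ranging over the Lie algebra automorphisms of `s₁`, is
`{ x₁ e₁₂ + x₂ e₁₃ + x₃ e₁₄ : x₁, x₂ ∈ ℝ, x₃ ≠ 0 }`. -/
theorem stmt_18 {L : Type*} [LieRing L] [LieAlgebra ℝ L]
    (b : Module.Basis (Fin 4) ℝ L)
    (h12 : ⁅b 0, b 1⁆ = 0) (h13 : ⁅b 0, b 2⁆ = 0) (h14 : ⁅b 0, b 3⁆ = 0)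
    (h23 : ⁅b 1, b 2⁆ = 0) (h24 : ⁅b 1, b 3⁆ = -b 0) (h34 : ⁅b 2, b 3⁆ = -b 2) :
    {w : L ⊗[ℝ] L | ∃ T : L ≃ₗ[ℝ] L, (∀ x y : L, T ⁅x, y⁆ = ⁅T x, T y⁆) ∧
        TensorProduct.congr T T (b 0 ⊗ₜ[ℝ] b 3 - b 3 ⊗ₜ[ℝ] b 0) = w} =
      {w : L ⊗[ℝ] L | ∃ x₁ x₂ x₃ : ℝ, x₃ ≠ 0 ∧
        w = x₁ • (b 0 ⊗ₜ[ℝ] b 1 - b 1 ⊗ₜ[ℝ] b 0) +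
            x₂ • (b 0 ⊗ₜ[ℝ] b 2 - b 2 ⊗ₜ[ℝ] b 0) +
            x₃ • (b 0 ⊗ₜ[ℝ] b 3 - b 3 ⊗ₜ[ℝ] b 0)} := by
  have brkt := aux_brkt b h12 h13 h14 h23 h24 h34
  ext w
  simp only [Set.mem_setOf_eq]
  constructor
  · rintro ⟨T, hT, hTw⟩
    -- b 0 is central
    have hcentral : ∀ z : L, ⁅(b 0 : L), z⁆ = 0 := by
      intro z
      conv_lhs => rw [aux_expand b z]
      simp only [lie_add, lie_smul, h12, h13, h14, lie_self, smul_zero, add_zero]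
    -- T (b 0) is central
    have hTc : ∀ y : L, ⁅T (b 0), y⁆ = 0 := by
      intro y
      have h := hT (b 0) (T.symm y)
      rw [hcentral, map_zero, T.apply_symm_apply] at h
      exact h.symm
    -- coordinates of T (b 0)
    have e0a : ⁅T (b 0), b 1⁆ = 0 := hTc _
    rw [show (b 1 : L) = (0:ℝ) • b 0 + (1:ℝ) • b 1 + (0:ℝ) • b 2 + (0:ℝ) • b 3 from by
        module] at e0a
    rw [aux_expand b (T (b 0)), brkt] at e0a
    have e0a' : (b.repr (T (b 0)) 3 * 1 - b.repr (T (b 0)) 1 * 0) • b 0 + (0:ℝ) • b 1 +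
        (b.repr (T (b 0)) 3 * 0 - b.repr (T (b 0)) 2 * 0) • b 2 + (0:ℝ) • b 3 = 0 := by
      linear_combination (norm := module) e0a
    obtain ⟨z0, -, -, -⟩ := aux_indep b _ _ _ _ e0a'
    have hc3 : b.repr (T (b 0)) 3 = 0 := by linarith [z0]
    have e0b : ⁅T (b 0), b 3⁆ = 0 := hTc _
    rw [show (b 3 : L) = (0:ℝ) • b 0 + (0:ℝ) • b 1 + (0:ℝ) • b 2 + (1:ℝ) • b 3 from by
        module] at e0b
    rw [aux_expand b (T (b 0)), brkt] at e0b
    have e0b' : (b.repr (T (b 0)) 3 * 0 - b.repr (T (b 0)) 1 * 1) • b 0 + (0:ℝ) • b 1 +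
        (b.repr (T (b 0)) 3 * 0 - b.repr (T (b 0)) 2 * 1) • b 2 + (0:ℝ) • b 3 = 0 := by
      linear_combination (norm := module) e0b
    obtain ⟨y0, -, y2, -⟩ := aux_indep b _ _ _ _ e0b'
    have hc1 : b.repr (T (b 0)) 1 = 0 := by linarith [y0]
    have hc2 : b.repr (T (b 0)) 2 = 0 := by linarith [y2]
    have hTb0 : T (b 0) = b.repr (T (b 0)) 0 • b 0 := by
      conv_lhs => rw [aux_expand b (T (b 0))]
      rw [hc1, hc2, hc3]
      module
    have hc0 : b.repr (T (b 0)) 0 ≠ 0 := by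
      intro h
      have hz : T (b 0) = 0 := by rw [hTb0, h, zero_smul]
      have : (b 0 : L) = 0 := by
        apply T.injective; rw [hz, map_zero]
      exact b.ne_zero 0 this
    -- coordinates of T (b 2), T (b 3)
    have e2 : T ⁅b 2, b 3⁆ = ⁅T (b 2), T (b 3)⁆ := hT _ _
    rw [h34, map_neg, aux_expand b (T (b 2)), aux_expand b (T (b 3)), brkt] at e2
    have e2' : (b.repr (T (b 2)) 0 + (b.repr (T (b 2)) 3 * b.repr (T (b 3)) 1
          - b.repr (T (b 2)) 1 * b.repr (T (b 3)) 3)) • b 0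
        + b.repr (T (b 2)) 1 • b 1
        + (b.repr (T (b 2)) 2 + (b.repr (T (b 2)) 3 * b.repr (T (b 3)) 2
          - b.repr (T (b 2)) 2 * b.repr (T (b 3)) 3)) • b 2
        + b.repr (T (b 2)) 3 • b 3 = 0 := by
      linear_combination (norm := module) -e2
    obtain ⟨w0, w1, w2, w3⟩ := aux_indep b _ _ _ _ e2'
    have hu2 : b.repr (T (b 2)) 2 ≠ 0 := by
      intro h
      have hz : T (b 2) = 0 := by
        rw [aux_expand b (T (b 2)), h, w1, w3]
        have hu0 : b.repr (T (b 2)) 0 = 0 := by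
          rw [w1, w3] at w0; simpa using w0
        rw [hu0]; module
      have : (b 2 : L) = 0 := by apply T.injective; rw [hz, map_zero]
      exact b.ne_zero 2 this
    have hg3 : b.repr (T (b 3)) 3 = 1 := by
      rw [w3] at w2
      have : b.repr (T (b 2)) 2 * (1 - b.repr (T (b 3)) 3) = 0 := by ring_nf; linarith [w2]
      rcases mul_eq_zero.mp this with h | h
      · exact absurd h hu2
      · linarith [h]
    -- conclude
    obtain ⟨c0, hc0', hTb0'⟩ : ∃ c : ℝ, c ≠ 0 ∧ T (b 0) = c • b 0 := ⟨_, hc0, hTb0⟩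
    obtain ⟨g0, g1, g2, hTb3'⟩ : ∃ g0 g1 g2 : ℝ,
        T (b 3) = g0 • b 0 + g1 • b 1 + g2 • b 2 + (1:ℝ) • b 3 := by
      refine ⟨b.repr (T (b 3)) 0, b.repr (T (b 3)) 1, b.repr (T (b 3)) 2, ?_⟩
      conv_lhs => rw [aux_expand b (T (b 3))]
      rw [hg3]
    refine ⟨c0 * g1, c0 * g2, c0, hc0', ?_⟩
    · rw [← hTw, map_sub, TensorProduct.congr_tmul, TensorProduct.congr_tmul,
        hTb0', hTb3']
      simp only [tmul_add, add_tmul, tmul_sub, sub_tmul, tmul_smul,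
        ← TensorProduct.smul_tmul', smul_sub, one_smul]
      module
  · rintro ⟨x₁, x₂, x₃, hx₃, hw⟩
    obtain ⟨hcomp1, hcomp2⟩ := auxT_comp b x₃ (x₁/x₃) (x₂/x₃) hx₃
    refine ⟨LinearEquiv.ofLinear (auxT b x₃ (x₁/x₃) (x₂/x₃))
        (auxT b x₃⁻¹ (-((x₁/x₃)/x₃)) (-(x₂/x₃))) hcomp1 hcomp2, ?_, ?_⟩
    · intro x y
      simp only [LinearEquiv.ofLinear_apply]
      rw [aux_expand b x, aux_expand b y, brkt]
      rw [auxTapp, auxTapp, brkt]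
      simp only [map_add, map_smul, auxT0, auxT2]
      module
    · simp only [map_sub, TensorProduct.congr_tmul, LinearEquiv.ofLinear_apply,
        auxT0, auxT3]
      rw [hw]
      simp only [tmul_add, add_tmul, tmul_sub, sub_tmul, tmul_smul,
        ← TensorProduct.smul_tmul', smul_sub, one_smul]
      match_scalars <;> field_simp
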